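/- Suppose f − 1 = λm and let χ be a multiplicative character of order m on F_q. Then H_{q,m} is a (q, f, λ)-difference set in F_q if and only if Σ_{t=1, t≠s}^{m−1} χ^t(−1) G_q(χ^t) G_q(χ^{s−t}) = (1 + χ^s(−1)) G_q(χ^s) for every s = 1, ..., m − 1. -/

import Mathlib

/-- `D` is a `(q, k, l)`-difference set in the additive group `F` (with `q = |F|`). -/
def IsDiffSet {F : Type*} [AddGroup F] (D : Set F) (k l : ℕ) : Prop :=
  D.ncard = k ∧
    ∀ a : F, a ≠ 0 → {x : F × F | x.1 ∈ D ∧ x.2 ∈ D ∧ x.1 - x.2 = a}.ncard = l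

/-- The set of nonzero `m`-th powers in `F`. -/
def Hset (F : Type*) [Field F] (m : ℕ) : Set F :=
  {x : F | x ≠ 0 ∧ ∃ y : F, y ^ m = x}

/-- The Gauss sum `G_q(χ) = ∑ α ∈ F_q, χ(α) ζ_p^{Tr(α)}`, where `Tr` is the trace map
from `F_q` to `F_p` and `ζ_p = e^{2πi/p}`. -/
noncomputable def Gsum (p : ℕ) (F : Type*) [Field F] [Fintype F] [Algebra (ZMod p) F]
    (χ : MulChar F ℂ) : ℂ :=
  ∑ α : F, χ α *
    Complex.exp (2 * Real.pi * Complex.I * ((Algebra.trace (ZMod p) F α).val : ℂ) / p)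


open Finset
set_option linter.unusedSectionVars false
set_option linter.unusedVariables false
set_option maxHeartbeats 1600000

lemma zpP_pow (p : ℕ) [NeZero p] : Complex.exp (2 * Real.pi * Complex.I / p) ^ p = 1 :=
  (Complex.isPrimitiveRoot_exp p (NeZero.ne p)).pow_eq_one

noncomputable def psiF (p : ℕ) [NeZero p] (F : Type*) [Field F] [Fintype F]
    [Algebra (ZMod p) F] : AddChar F ℂ where
  toFun α := AddChar.zmodChar p (zpP_pow p) (Algebra.trace (ZMod p) F α)
  map_zero_eq_one' := by
    show AddChar.zmodChar p (zpP_pow p) (Algebra.trace (ZMod p) F 0) = 1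
    rw [map_zero, AddChar.map_zero_eq_one]
  map_add_eq_mul' a b := by
    show AddChar.zmodChar p (zpP_pow p) _ = AddChar.zmodChar p (zpP_pow p) _ * AddChar.zmodChar p (zpP_pow p) _
    rw [map_add, AddChar.map_add_eq_mul]

lemma psiF_apply (p : ℕ) [NeZero p] (F : Type*) [Field F] [Fintype F]
    [Algebra (ZMod p) F] (α : F) :
    psiF p F α =
      Complex.exp (2 * Real.pi * Complex.I * ((Algebra.trace (ZMod p) F α).val : ℂ) / p) := by
  show AddChar.zmodChar p (zpP_pow p) (Algebra.trace (ZMod p) F α) = _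
  rw [AddChar.zmodChar_apply, ← Complex.exp_nat_mul]
  ring_nf

lemma Gsum_eq_gaussSum (p : ℕ) [NeZero p] (F : Type*) [Field F] [Fintype F]
    [Algebra (ZMod p) F] (χ : MulChar F ℂ) : Gsum p F χ = gaussSum χ (psiF p F) := by
  unfold Gsum gaussSum
  exact Finset.sum_congr rfl fun x _ => by rw [psiF_apply]

lemma psiF_primitive (p : ℕ) [Fact p.Prime] (F : Type*) [Field F] [Fintype F]
    [Algebra (ZMod p) F] : AddChar.IsPrimitive (psiF p F) := by
  apply AddChar.IsPrimitive.of_ne_one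
  obtain ⟨α, hα⟩ := Algebra.trace_surjective (ZMod p) F 1
  intro h
  have h1 : psiF p F α = 1 := by rw [h]; rfl
  rw [psiF_apply, hα, ZMod.val_one p] at h1
  have hprim := Complex.isPrimitiveRoot_exp p (NeZero.ne p)
  have h2 : Complex.exp (2 * Real.pi * Complex.I / p) ^ (1:ℕ) = 1 := by
    rw [pow_one, ← h1]; ring_nf
  have h3 := Nat.dvd_one.mp ((IsPrimitiveRoot.pow_eq_one_iff_dvd hprim 1).mp h2)
  have hp2 := (Fact.out : p.Prime).two_le
  omega

section CharFacts
variable {F : Type*} [Field F] [Fintype F] [DecidableEq F]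
variable {m : ℕ} {χ : MulChar F ℂ}

lemma chi_pow_eq_one_iff (hχ : orderOf χ = m) (t : ℕ) : χ ^ t = 1 ↔ m ∣ t := by
  rw [← hχ]; exact orderOf_dvd_iff_pow_eq_one.symm

lemma chi_pow_ne_one (hχ : orderOf χ = m) {t : ℕ} (h1 : 1 ≤ t) (h2 : t ≤ m - 1) :
    χ ^ t ≠ 1 := by
  intro h
  rw [chi_pow_eq_one_iff hχ] at h
  have := Nat.le_of_dvd (by omega) h
  omega

lemma chi_zpow_congr (hχ : orderOf χ = m) {i j : ℤ} (h : i ≡ j [ZMOD m]) :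
    χ ^ i = χ ^ j := by
  rw [zpow_eq_zpow_iff_modEq, hχ]; exact h

lemma chi_orderOf_unit (hm : 0 < m) (hχ : orderOf χ = m) (g : Fˣ)
    (hg : ∀ u : Fˣ, u ∈ Submonoid.powers g) : orderOf (χ (g : F)) = m := by
  have hkey : ∀ t : ℕ, (χ (g : F)) ^ t = 1 → χ ^ t = 1 := by
    intro t h
    apply MulChar.ext
    intro u
    obtain ⟨k, hk⟩ := hg u
    rw [MulChar.one_apply_coe, MulChar.pow_apply_coe, ← hk]
    show χ ((g : F) ^ k) ^ t = 1
    rw [map_pow, ← pow_mul, mul_comm, pow_mul, h, one_pow]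
  have h1 : (χ (g : F)) ^ m = 1 := by
    have : (χ ^ m) (g : F) = 1 := by
      rw [(chi_pow_eq_one_iff hχ m).mpr dvd_rfl, MulChar.one_apply_coe]
    rw [← this, MulChar.pow_apply_coe]
  have hfin : orderOf (χ (g : F)) ∣ m := orderOf_dvd_of_pow_eq_one h1
  have h2 : m ∣ orderOf (χ (g : F)) := by
    rw [← hχ]
    apply orderOf_dvd_of_pow_eq_one
    apply hkey
    exact pow_orderOf_eq_one _
  exact Nat.dvd_antisymm hfin h2

lemma mem_H_iff_chi_eq_one (hm : 0 < m) (hχ : orderOf χ = m) {x : F} (hx : x ≠ 0) :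
    (∃ y : F, y ^ m = x) ↔ χ x = 1 := by
  constructor
  · rintro ⟨y, rfl⟩
    have hy : y ≠ 0 := fun h => hx (by simp [h, hm.ne'])
    rw [map_pow]
    have : (χ ^ m) y = 1 := by
      rw [(chi_pow_eq_one_iff hχ m).mpr dvd_rfl, MulChar.one_apply hy.isUnit]
    rwa [MulChar.pow_apply' χ hm.ne' y] at this
  · intro h
    obtain ⟨g, hg⟩ := IsCyclic.exists_generator (α := Fˣ)
    have hg' : ∀ u : Fˣ, u ∈ Submonoid.powers g := fun u =>
      (mem_powers_iff_mem_zpowers).mpr (hg u)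
    obtain ⟨k, hk⟩ := hg' (Units.mk0 x hx)
    have hxk : (g : F) ^ k = x := by
      have : g ^ k = Units.mk0 x hx := hk
      rw [← Units.val_pow_eq_pow_val, this]; rfl
    have hord := chi_orderOf_unit hm hχ g hg'
    have : (χ (g : F)) ^ k = 1 := by rw [← map_pow, hxk, h]
    obtain ⟨j, hj⟩ : m ∣ k := by
      rw [← hord]
      exact orderOf_dvd_of_pow_eq_one this
    exact ⟨(g : F) ^ j, by rw [← pow_mul, mul_comm, ← hj, hxk]⟩

lemma sum_chi_pow_eq (hm : 0 < m) (hχ : orderOf χ = m) {x : F} (hx : x ≠ 0) :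
    ∑ t ∈ range m, (χ ^ t) x = if (∃ y : F, y ^ m = x) then (m : ℂ) else 0 := by
  have hpc : ∀ t : ℕ, (χ ^ t) x = (χ x) ^ t := by
    intro t
    have := MulChar.pow_apply_coe χ t (Units.mk0 x hx)
    simpa using this
  simp_rw [hpc]
  have hxm : (χ x) ^ m = 1 := by
    rw [← hpc m, (chi_pow_eq_one_iff hχ m).mpr dvd_rfl, MulChar.one_apply hx.isUnit]
  rw [if_congr (mem_H_iff_chi_eq_one hm hχ hx) rfl rfl]
  by_cases h : χ x = 1
  · simp [h]
  · rw [if_neg h, geom_sum_eq h, hxm, sub_self, zero_div]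

end CharFacts

lemma mod_closed (m a : ℕ) (hm : 0 < m) (ha : a < 2 * m) :
    a % m = if a < m then a else a - m := by
  split_ifs with h
  · exact Nat.mod_eq_of_lt h
  · rw [Nat.mod_eq_sub_mod (le_of_not_gt h), Nat.mod_eq_of_lt (by omega)]

lemma helper1 (m t s : ℕ) (hm : 0 < m) (ht1 : 1 ≤ t) (ht2 : t ≤ m - 1)
    (hs1 : 1 ≤ s) (hs2 : s ≤ m - 1) :
    (t + s) % m ≠ t ∧ (t + s) % m < m ∧ ((t + s) % m + (m - t)) % m = s := by
  have h1 : (t + s) % m = if t + s < m then t + s else t + s - m :=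
    mod_closed m (t + s) hm (by omega)
  refine ⟨?_, Nat.mod_lt _ hm, ?_⟩
  · rw [h1]; split_ifs <;> omega
  · rw [h1]
    have h2 : ((if t + s < m then t + s else t + s - m) + (m - t)) % m
        = if ((if t + s < m then t + s else t + s - m) + (m - t)) < m
          then ((if t + s < m then t + s else t + s - m) + (m - t))
          else ((if t + s < m then t + s else t + s - m) + (m - t)) - m :=
      mod_closed m _ hm (by split_ifs <;> omega)
    rw [h2]; split_ifs <;> omega

lemma helper2 (m t u : ℕ) (hm : 0 < m) (ht1 : 1 ≤ t) (ht2 : t ≤ m - 1)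
    (hu : u < m) (hut : u ≠ t) :
    1 ≤ (u + (m - t)) % m ∧ (u + (m - t)) % m ≤ m - 1 ∧ (u + (m - t)) % m ≠ u ∧
      (t + (u + (m - t)) % m) % m = u ∧
      ((((u + (m - t)) % m : ℕ) : ℤ) = (u : ℤ) - t ∨
        (((u + (m - t)) % m : ℕ) : ℤ) = (u : ℤ) - t + m) := by
  have h1 : (u + (m - t)) % m = if u + (m - t) < m then u + (m - t) else u + (m - t) - m :=
    mod_closed m _ hm (by omega)
  have h3 : (u + (m - t)) % m < m := Nat.mod_lt _ hm
  refine ⟨?_, by omega, ?_, ?_, ?_⟩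
  · rw [h1]; split_ifs <;> omega
  · rw [h1]; split_ifs <;> omega
  · have h2 : (t + (u + (m - t)) % m) % m
        = if t + (u + (m - t)) % m < m then t + (u + (m - t)) % m
          else t + (u + (m - t)) % m - m :=
      mod_closed m _ hm (by omega)
    rw [h2, h1]; split_ifs <;> omega
  · rcases lt_or_ge (u + (m - t)) m with h | h
    · right; rw [h1, if_pos h]; omega
    · left; rw [h1, if_neg (by omega)]; omega


section Main
variable {F : Type*} [Field F] [Fintype F] [DecidableEq F]
variable {m : ℕ} {χ : MulChar F ℂ}

lemma chi_val_ne_zero (χ : MulChar F ℂ) {c : F} (hc : c ≠ 0) : χ c ≠ 0 := by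
  have : χ c * χ c⁻¹ = 1 := by
    rw [← map_mul, mul_inv_cancel₀ hc, map_one]
  exact left_ne_zero_of_mul_eq_one this

def Hf (F : Type*) [Field F] [Fintype F] [DecidableEq F] (m : ℕ) : Finset F :=
  univ.filter (fun x => x ≠ 0 ∧ ∃ y : F, y ^ m = x)

lemma mem_Hf {x : F} : x ∈ Hf F m ↔ x ≠ 0 ∧ ∃ y : F, y ^ m = x := by
  unfold Hf
  rw [Finset.mem_filter]
  simp only [Finset.mem_univ, true_and]

lemma range_eq_insert_zero (m : ℕ) (hm : 0 < m) :
    range m = insert 0 (Icc 1 (m - 1)) := by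
  ext t
  simp only [mem_range, mem_insert, mem_Icc]
  omega

lemma sum_over_Hf (hm : 0 < m) (hχ : orderOf χ = m) (φ : F → ℂ) :
    ∑ x ∈ Hf F m, (m : ℂ) * φ x
      = ∑ x ∈ univ.erase (0 : F), (∑ t ∈ range m, (χ ^ t) x) * φ x := by
  have h1 : ∀ x ∈ univ.erase (0 : F),
      (∑ t ∈ range m, (χ ^ t) x) * φ x
        = if (∃ y : F, y ^ m = x) then (m : ℂ) * φ x else 0 := by
    intro x hx
    rw [sum_chi_pow_eq hm hχ (Finset.mem_erase.mp hx).1]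
    split_ifs <;> simp
  rw [Finset.sum_congr rfl h1, ← Finset.sum_filter]
  apply Finset.sum_congr _ (fun _ _ => rfl)
  ext x
  simp only [Finset.mem_filter, Finset.mem_erase, mem_Hf, Finset.mem_univ, true_and]
  tauto

lemma chi_pow_zero_eq (t : ℕ) : (χ ^ t) (0 : F) = 0 :=
  MulChar.map_nonunit _ (by simpa using not_isUnit_zero)

lemma Hf_card {f : ℕ} (hm : 0 < m) (hχ : orderOf χ = m)
    (hcard : Fintype.card F = m * f + 1) : (Hf F m).card = f := by
  have key := sum_over_Hf hm hχ (fun _ => (1 : ℂ))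
  simp only [mul_one] at key
  -- LHS of key is m * card
  rw [Finset.sum_const, nsmul_eq_mul] at key
  -- RHS: swap sums
  have hswap : ∑ x ∈ univ.erase (0 : F), (∑ t ∈ range m, (χ ^ t) x)
      = ∑ t ∈ range m, ∑ x ∈ univ.erase (0 : F), (χ ^ t) x := Finset.sum_comm
  have hterm : ∀ t ∈ range m, ∑ x ∈ univ.erase (0 : F), (χ ^ t) x
      = if t = 0 then ((Fintype.card F - 1 : ℕ) : ℂ) else 0 := by
    intro t ht
    rcases eq_or_ne t 0 with rfl | htne
    · rw [if_pos rfl]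
      have : ∀ x ∈ univ.erase (0 : F), (χ ^ 0) x = 1 := by
        intro x hx
        rw [pow_zero, MulChar.one_apply (Finset.mem_erase.mp hx).1.isUnit]
      rw [Finset.sum_congr rfl this, Finset.sum_const, nsmul_eq_mul, mul_one,
        Finset.card_erase_of_mem (Finset.mem_univ _), Finset.card_univ]
    · rw [if_neg htne]
      have h2 : ∑ x ∈ univ.erase (0 : F), (χ ^ t) x = ∑ x : F, (χ ^ t) x :=
        Finset.sum_erase _ (chi_pow_zero_eq t)
      rw [h2]
      exact MulChar.sum_eq_zero_of_ne_one
        (chi_pow_ne_one hχ (by omega) (by rw [Finset.mem_range] at ht; omega))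
  rw [hswap, Finset.sum_congr rfl hterm, Finset.sum_ite_eq' (range m) 0 _] at key
  rw [if_pos (Finset.mem_range.mpr hm), hcard] at key
  simp only [Nat.add_sub_cancel] at key
  have hmC : (m : ℂ) ≠ 0 := Nat.cast_ne_zero.mpr hm.ne'
  have key2 : (m : ℂ) * (Hf F m).card = (m : ℂ) * f := by
    rw [mul_comm, key]; push_cast; ring
  exact_mod_cast mul_left_cancel₀ hmC key2

lemma mS_eq (hm : 0 < m) (hχ : orderOf χ = m) (ψ : AddChar F ℂ)
    (hψ : ψ.IsPrimitive) {c : F} (hc : c ≠ 0) :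
    (m : ℂ) * ∑ x ∈ Hf F m, ψ (c * x)
      = -1 + ∑ t ∈ Icc 1 (m - 1), ((χ ^ t) c)⁻¹ * gaussSum (χ ^ t) ψ := by
  rw [Finset.mul_sum]
  have h0 : ∀ x ∈ Hf F m, (m : ℂ) * ψ (c * x) = (m : ℂ) * (fun x => ψ (c * x)) x :=
    fun x _ => rfl
  rw [Finset.sum_congr rfl h0, sum_over_Hf hm hχ (fun x => ψ (c * x))]

  simp_rw [Finset.sum_mul]
  rw [Finset.sum_comm]
  have hterm : ∀ t ∈ range m, (∑ x ∈ univ.erase (0 : F), (χ ^ t) x * ψ (c * x))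
      = if t = 0 then -1 else ((χ ^ t) c)⁻¹ * gaussSum (χ ^ t) ψ := by
    intro t ht
    have hext : ∑ x ∈ univ.erase (0 : F), (χ ^ t) x * ψ (c * x)
        = ∑ x : F, (χ ^ t) x * ψ (c * x) := by
      apply Finset.sum_erase
      rw [chi_pow_zero_eq, zero_mul]
    rcases eq_or_ne t 0 with rfl | htne
    · rw [if_pos rfl]
      have h1 : ∀ x ∈ univ.erase (0 : F), (χ ^ 0) x * ψ (c * x) = ψ (c * x) := by
        intro x hx
        rw [pow_zero, MulChar.one_apply (Finset.mem_erase.mp hx).1.isUnit, one_mul]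
      rw [Finset.sum_congr rfl h1, Finset.sum_erase_eq_sub (Finset.mem_univ _)]
      have h2 : ∑ x : F, ψ (c * x) = 0 := by
        have h3 := AddChar.sum_mulShift c hψ
        rw [if_neg hc] at h3
        push_cast at h3
        rw [← h3]
        exact Finset.sum_congr rfl fun x _ => by rw [mul_comm]
      rw [h2, mul_zero, AddChar.map_zero_eq_one]
      ring
    · rw [if_neg htne, hext]
      have hgs : ∑ x : F, (χ ^ t) x * ψ (c * x)
          = gaussSum (χ ^ t) (ψ.mulShift c) := by
        unfold gaussSum
        exact Finset.sum_congr rfl fun x _ => by rw [AddChar.mulShift_apply]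
      rw [hgs]
      have := gaussSum_mulShift (χ ^ t) ψ (Units.mk0 c hc)
      have hne : (χ ^ t) c ≠ 0 := chi_val_ne_zero (χ ^ t) hc
      field_simp
      rw [mul_comm] at this
      exact this
  rw [Finset.sum_congr rfl hterm, range_eq_insert_zero m hm,
    Finset.sum_insert (by simp), if_pos rfl]
  congr 1
  apply Finset.sum_congr rfl
  intro t ht
  rw [if_neg]
  rw [Finset.mem_Icc] at ht
  omega


lemma eps_sq (ξ : MulChar F ℂ) : ξ (-1) * ξ (-1) = 1 := by
  rw [← map_mul, neg_mul_neg, one_mul, map_one]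

lemma eps_inv (ξ : MulChar F ℂ) : (ξ (-1))⁻¹ = ξ (-1) :=
  inv_eq_of_mul_eq_one_right (eps_sq ξ)

lemma expansion (hm : 0 < m) (hχ : orderOf χ = m) (ψ : AddChar F ℂ) (hψ : ψ.IsPrimitive)
    {c : F} (hc : c ≠ 0) :
    ((m : ℂ) * ∑ x ∈ Hf F m, ψ (c * x)) * ((m : ℂ) * ∑ y ∈ Hf F m, ψ (-c * y))
      = 1 + ((m : ℂ) - 1) * (Fintype.card F : ℂ)
        + ∑ u ∈ Icc 1 (m - 1), ((χ ^ u) c)⁻¹ *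
            ((∑ t ∈ (Icc 1 (m - 1)).erase u,
               (χ ^ t) (-1) * gaussSum (χ ^ t) ψ * gaussSum (χ ^ ((u : ℤ) - (t : ℤ))) ψ)
              - (1 + (χ ^ u) (-1)) * gaussSum (χ ^ u) ψ) := by
  have hmc : (-c : F) ≠ 0 := neg_ne_zero.mpr hc
  rw [mS_eq hm hχ ψ hψ hc, mS_eq hm hχ ψ hψ hmc]
  have hB : ∀ s ∈ Icc 1 (m - 1), ((χ ^ s) (-c))⁻¹ * gaussSum (χ ^ s) ψ
      = (χ ^ s) (-1) * (((χ ^ s) c)⁻¹ * gaussSum (χ ^ s) ψ) := by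
    intro s hs
    have h1 : (χ ^ s) (-c) = (χ ^ s) (-1) * (χ ^ s) c := by
      rw [← map_mul]; norm_num
    rw [h1, mul_inv, eps_inv]
    ring
  rw [Finset.sum_congr rfl hB]
  have hXY : (∑ t ∈ Icc 1 (m - 1), ((χ ^ t) c)⁻¹ * gaussSum (χ ^ t) ψ)
        * (∑ s ∈ Icc 1 (m - 1), (χ ^ s) (-1) * (((χ ^ s) c)⁻¹ * gaussSum (χ ^ s) ψ))
      = ((m : ℂ) - 1) * (Fintype.card F : ℂ)
        + ∑ u ∈ Icc 1 (m - 1), ((χ ^ u) c)⁻¹ *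
            (∑ t ∈ (Icc 1 (m - 1)).erase u,
              (χ ^ t) (-1) * gaussSum (χ ^ t) ψ * gaussSum (χ ^ ((u : ℤ) - (t : ℤ))) ψ) := by
    rw [Finset.sum_mul_sum]
    have hstep1 : ∀ t ∈ Icc 1 (m - 1), ∀ s ∈ Icc 1 (m - 1),
        (((χ ^ t) c)⁻¹ * gaussSum (χ ^ t) ψ)
            * ((χ ^ s) (-1) * (((χ ^ s) c)⁻¹ * gaussSum (χ ^ s) ψ))
        = (χ ^ s) (-1) * ((χ ^ (t + s)) c)⁻¹ * gaussSum (χ ^ t) ψ * gaussSum (χ ^ s) ψ := by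
      intro t ht s hs
      have h2 : (χ ^ (t + s)) c = (χ ^ t) c * (χ ^ s) c := by
        rw [pow_add, MulChar.coeToFun_mul, Pi.mul_apply]
      rw [h2, mul_inv]
      ring
    rw [Finset.sum_congr rfl (fun t ht => Finset.sum_congr rfl (hstep1 t ht))]
    have hstep2 : ∀ t ∈ Icc 1 (m - 1),
        (∑ s ∈ Icc 1 (m - 1), (χ ^ s) (-1) * ((χ ^ (t + s)) c)⁻¹
            * gaussSum (χ ^ t) ψ * gaussSum (χ ^ s) ψ)
        = ∑ u ∈ (range m).erase t,
            (χ ^ ((u + (m - t)) % m)) (-1) * ((χ ^ u) c)⁻¹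
              * gaussSum (χ ^ t) ψ * gaussSum (χ ^ ((u + (m - t)) % m)) ψ := by
      intro t ht
      rw [Finset.mem_Icc] at ht
      refine Finset.sum_nbij' (fun s => (t + s) % m) (fun u => (u + (m - t)) % m)
        ?_ ?_ ?_ ?_ ?_
      · intro s hs
        rw [Finset.mem_Icc] at hs
        obtain ⟨hne, hlt, _⟩ := helper1 m t s hm ht.1 ht.2 hs.1 hs.2
        exact Finset.mem_erase.mpr ⟨hne, Finset.mem_range.mpr hlt⟩
      · intro u hu
        rw [Finset.mem_erase, Finset.mem_range] at hu
        obtain ⟨h1, h2, _, _, _⟩ := helper2 m t u hm ht.1 ht.2 hu.2 hu.1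
        rw [Finset.mem_Icc]
        exact ⟨h1, h2⟩
      · intro s hs
        rw [Finset.mem_Icc] at hs
        exact (helper1 m t s hm ht.1 ht.2 hs.1 hs.2).2.2
      · intro u hu
        rw [Finset.mem_erase, Finset.mem_range] at hu
        exact (helper2 m t u hm ht.1 ht.2 hu.2 hu.1).2.2.2.1
      · intro s hs
        rw [Finset.mem_Icc] at hs
        have h3 := (helper1 m t s hm ht.1 ht.2 hs.1 hs.2).2.2
        rw [h3]
        have h4 : (χ : MulChar F ℂ) ^ ((t + s) % m) = χ ^ (t + s) := by
          rw [← hχ]; exact pow_mod_orderOf χ (t + s)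
        rw [h4]
    rw [Finset.sum_congr rfl hstep2]
    have hswap : (∑ t ∈ Icc 1 (m - 1), ∑ u ∈ (range m).erase t,
            (χ ^ ((u + (m - t)) % m)) (-1) * ((χ ^ u) c)⁻¹
              * gaussSum (χ ^ t) ψ * gaussSum (χ ^ ((u + (m - t)) % m)) ψ)
        = ∑ u ∈ range m, ∑ t ∈ (Icc 1 (m - 1)).erase u,
            (χ ^ ((u + (m - t)) % m)) (-1) * ((χ ^ u) c)⁻¹
              * gaussSum (χ ^ t) ψ * gaussSum (χ ^ ((u + (m - t)) % m)) ψ := by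
      apply Finset.sum_comm'
      intro t u
      simp only [Finset.mem_erase, Finset.mem_range, Finset.mem_Icc]
      constructor
      · rintro ⟨h1, h2, h3⟩; exact ⟨⟨fun h => h2 h.symm, h1⟩, h3⟩
      · rintro ⟨⟨h1, h2⟩, h3⟩; exact ⟨h2, fun h => h1 h.symm, h3⟩
    rw [hswap, range_eq_insert_zero m hm, Finset.sum_insert (by simp)]
    have hzero : (∑ t ∈ (Icc 1 (m - 1)).erase 0,
          (χ ^ ((0 + (m - t)) % m)) (-1) * ((χ ^ (0:ℕ)) c)⁻¹
            * gaussSum (χ ^ t) ψ * gaussSum (χ ^ ((0 + (m - t)) % m)) ψ)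
        = ((m : ℂ) - 1) * (Fintype.card F : ℂ) := by
      rw [Finset.erase_eq_of_notMem (by simp)]
      have hterm : ∀ t ∈ Icc 1 (m - 1),
          (χ ^ ((0 + (m - t)) % m)) (-1) * ((χ ^ (0:ℕ)) c)⁻¹
              * gaussSum (χ ^ t) ψ * gaussSum (χ ^ ((0 + (m - t)) % m)) ψ
            = (Fintype.card F : ℂ) := by
        intro t ht
        rw [Finset.mem_Icc] at ht
        have h5 : (0 + (m - t)) % m = m - t := by
          rw [zero_add, Nat.mod_eq_of_lt (by omega)]
        have h6 : (χ : MulChar F ℂ) ^ (m - t) = (χ ^ t)⁻¹ := by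
          apply eq_inv_of_mul_eq_one_left
          rw [← pow_add]
          have h7 : m - t + t = m := by omega
          rw [h7]
          exact (chi_pow_eq_one_iff hχ m).mpr dvd_rfl
        rw [h5, h6, pow_zero, MulChar.one_apply hc.isUnit, inv_one,
          ← mul_gaussSum_inv_eq_gaussSum ((χ ^ t)⁻¹) ψ]
        have h8 := gaussSum_mul_gaussSum_eq_card (chi_pow_ne_one hχ ht.1 ht.2) hψ
        calc (χ ^ t)⁻¹ (-1) * 1 * gaussSum (χ ^ t) ψ
              * ((χ ^ t)⁻¹ (-1) * gaussSum ((χ ^ t)⁻¹) ψ⁻¹)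
            = ((χ ^ t)⁻¹ (-1) * (χ ^ t)⁻¹ (-1))
                * (gaussSum (χ ^ t) ψ * gaussSum ((χ ^ t)⁻¹) ψ⁻¹) := by ring
          _ = (Fintype.card F : ℂ) := by rw [eps_sq, h8, one_mul]
      rw [Finset.sum_congr rfl hterm, Finset.sum_const, Nat.card_Icc, nsmul_eq_mul]
      have : ((m - 1 + 1 - 1 : ℕ) : ℂ) = (m : ℂ) - 1 := by
        push_cast [Nat.sub_add_cancel hm, Nat.cast_sub hm]
        ring
      rw [this]
    have hu : ∀ u ∈ Icc 1 (m - 1),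
        (∑ t ∈ (Icc 1 (m - 1)).erase u,
            (χ ^ ((u + (m - t)) % m)) (-1) * ((χ ^ u) c)⁻¹
              * gaussSum (χ ^ t) ψ * gaussSum (χ ^ ((u + (m - t)) % m)) ψ)
          = ((χ ^ u) c)⁻¹ * (∑ t ∈ (Icc 1 (m - 1)).erase u,
              (χ ^ t) (-1) * gaussSum (χ ^ t) ψ * gaussSum (χ ^ ((u : ℤ) - (t : ℤ))) ψ) := by
      intro u hu'
      rw [Finset.mem_Icc] at hu'
      have hum : u < m := by omega
      rw [Finset.mul_sum]
      refine Finset.sum_nbij' (fun t => (u + (m - t)) % m) (fun t => (u + (m - t)) % m)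
        ?_ ?_ ?_ ?_ ?_
      · intro t ht
        rw [Finset.mem_erase, Finset.mem_Icc] at ht
        obtain ⟨h1, h2, h3, _, _⟩ :=
          helper2 m t u hm ht.2.1 ht.2.2 hum (fun h => ht.1 h.symm)
        rw [Finset.mem_erase, Finset.mem_Icc]
        exact ⟨h3, h1, h2⟩
      · intro t ht
        rw [Finset.mem_erase, Finset.mem_Icc] at ht
        obtain ⟨h1, h2, h3, _, _⟩ :=
          helper2 m t u hm ht.2.1 ht.2.2 hum (fun h => ht.1 h.symm)
        rw [Finset.mem_erase, Finset.mem_Icc]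
        exact ⟨h3, h1, h2⟩
      · intro t ht
        rw [Finset.mem_erase, Finset.mem_Icc] at ht
        obtain ⟨h1, h2, h3, h4, h5⟩ :=
          helper2 m t u hm ht.2.1 ht.2.2 hum (fun h => ht.1 h.symm)
        show (u + (m - (u + (m - t)) % m)) % m = t
        set σ := (u + (m - t)) % m with hσ
        rw [← h4, add_comm t σ]
        exact (helper1 m σ t hm h1 h2 ht.2.1 ht.2.2).2.2
      · intro t ht
        rw [Finset.mem_erase, Finset.mem_Icc] at ht
        obtain ⟨h1, h2, h3, h4, h5⟩ :=
          helper2 m t u hm ht.2.1 ht.2.2 hum (fun h => ht.1 h.symm)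
        show (u + (m - (u + (m - t)) % m)) % m = t
        set σ := (u + (m - t)) % m with hσ
        rw [← h4, add_comm t σ]
        exact (helper1 m σ t hm h1 h2 ht.2.1 ht.2.2).2.2
      · intro t ht
        rw [Finset.mem_erase, Finset.mem_Icc] at ht
        obtain ⟨h1, h2, h3, h4, h5⟩ :=
          helper2 m t u hm ht.2.1 ht.2.2 hum (fun h => ht.1 h.symm)
        have h6 : (χ : MulChar F ℂ) ^ ((u : ℤ) - (((u + (m - t)) % m : ℕ) : ℤ)) = χ ^ t := by
          rw [← zpow_natCast χ t]
          apply chi_zpow_congr hχ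
          rcases h5 with h5 | h5 <;> rw [h5]
          · have : (u : ℤ) - ((u : ℤ) - t) = t := by ring
            rw [this]
          · have : (u : ℤ) - ((u : ℤ) - t + m) = t - m := by ring
            rw [this]
            exact Int.modEq_iff_dvd.mpr ⟨1, by ring⟩
        rw [h6]
        ring
    rw [hzero, Finset.sum_congr rfl hu]
  have hsplit : ∀ u ∈ Icc 1 (m - 1),
      ((χ ^ u) c)⁻¹ *
        ((∑ t ∈ (Icc 1 (m - 1)).erase u,
            (χ ^ t) (-1) * gaussSum (χ ^ t) ψ * gaussSum (χ ^ ((u : ℤ) - (t : ℤ))) ψ)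
          - (1 + (χ ^ u) (-1)) * gaussSum (χ ^ u) ψ)
      = ((χ ^ u) c)⁻¹ * (∑ t ∈ (Icc 1 (m - 1)).erase u,
            (χ ^ t) (-1) * gaussSum (χ ^ t) ψ * gaussSum (χ ^ ((u : ℤ) - (t : ℤ))) ψ)
        - (((χ ^ u) c)⁻¹ * gaussSum (χ ^ u) ψ
            + (χ ^ u) (-1) * (((χ ^ u) c)⁻¹ * gaussSum (χ ^ u) ψ)) := by
    intro u hu
    ring
  rw [Finset.sum_congr rfl hsplit, Finset.sum_sub_distrib, Finset.sum_add_distrib]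
  linear_combination hXY

/-- number of difference representations -/
noncomputable def Ncnt (F : Type*) [Field F] [Fintype F] [DecidableEq F] (m : ℕ) (a : F) : ℕ :=
  ((Hf F m ×ˢ Hf F m).filter (fun xy => xy.1 - xy.2 = a)).card

lemma prod_eq_sum_pairs (ψ : AddChar F ℂ) (c : F) :
    (∑ x ∈ Hf F m, ψ (c * x)) * (∑ y ∈ Hf F m, ψ (-c * y))
      = ∑ xy ∈ Hf F m ×ˢ Hf F m, ψ (c * (xy.1 - xy.2)) := by
  rw [Finset.sum_mul_sum, Finset.sum_product]
  apply Finset.sum_congr rfl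
  intro x _
  apply Finset.sum_congr rfl
  intro y _
  rw [← AddChar.map_add_eq_mul]
  ring_nf

lemma fourier_T (ψ : AddChar F ℂ) (c : F) :
    ∑ a : F, (Ncnt F m a : ℂ) * ψ (c * a)
      = (∑ x ∈ Hf F m, ψ (c * x)) * (∑ y ∈ Hf F m, ψ (-c * y)) := by
  rw [prod_eq_sum_pairs]
  have := Finset.sum_fiberwise_eq_sum_filter (Hf F m ×ˢ Hf F m) univ
    (fun xy => xy.1 - xy.2) (fun xy => ψ (c * (xy.1 - xy.2)))
  simp only [Finset.mem_univ, Finset.filter_true] at this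
  rw [← this]
  apply Finset.sum_congr rfl
  intro a _
  have h1 : ∀ xy ∈ (Hf F m ×ˢ Hf F m).filter (fun xy => xy.1 - xy.2 = a),
      ψ (c * (xy.1 - xy.2)) = ψ (c * a) := by
    intro xy hxy
    rw [(Finset.mem_filter.mp hxy).2]
  rw [Finset.sum_congr rfl h1, Finset.sum_const, nsmul_eq_mul]
  rfl

lemma inversion (ψ : AddChar F ℂ) (hψ : ψ.IsPrimitive) (a : F) :
    ∑ c : F, (∑ x ∈ Hf F m, ψ (c * x)) * (∑ y ∈ Hf F m, ψ (-c * y)) * ψ (-(c * a))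
      = (Fintype.card F : ℂ) * (Ncnt F m a : ℂ) := by
  have h1 : ∀ c : F, (∑ x ∈ Hf F m, ψ (c * x)) * (∑ y ∈ Hf F m, ψ (-c * y)) * ψ (-(c * a))
      = ∑ xy ∈ Hf F m ×ˢ Hf F m, ψ ((xy.1 - xy.2 - a) * c) := by
    intro c
    rw [prod_eq_sum_pairs, Finset.sum_mul]
    apply Finset.sum_congr rfl
    intro xy _
    rw [← AddChar.map_add_eq_mul]
    ring_nf
  simp_rw [h1]
  rw [Finset.sum_comm]
  have h2 : ∀ xy ∈ Hf F m ×ˢ Hf F m,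
      (∑ c : F, ψ ((xy.1 - xy.2 - a) * c))
        = if xy.1 - xy.2 = a then (Fintype.card F : ℂ) else 0 := by
    intro xy _
    have h3 : ∀ c : F, ψ ((xy.1 - xy.2 - a) * c) = ψ (c * (xy.1 - xy.2 - a)) := by
      intro c; rw [mul_comm]
    simp_rw [h3]
    rw [AddChar.sum_mulShift _ hψ]
    by_cases h : xy.1 - xy.2 = a
    · rw [if_pos (by rw [h, sub_self]), if_pos h]
    · rw [if_neg (by intro hz; exact h (by linear_combination (hz : xy.1-xy.2-a = 0))), if_neg h]
      simp
  rw [Finset.sum_congr rfl h2]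
  rw [Finset.sum_ite, Finset.sum_const, Finset.sum_const_zero, add_zero, nsmul_eq_mul]
  unfold Ncnt
  ring

end Main

theorem stmt2 (p m f l : ℕ) (hp : p.Prime) (hm : 0 < m) (hf : 0 < f)
    (F : Type*) [Field F] [Fintype F] [Algebra (ZMod p) F]
    (hq : ∃ n : ℕ, 0 < n ∧ Fintype.card F = p ^ n)
    (hcard : Fintype.card F = m * f + 1)
    (hlf : f - 1 = l * m)
    (χ : MulChar F ℂ) (hχ : orderOf χ = m) :
    IsDiffSet (Hset F m) f l ↔
      ∀ s : ℕ, 1 ≤ s → s ≤ m - 1 →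
        ∑ t ∈ (Finset.Icc 1 (m - 1)).erase s,
            (χ ^ t) (-1) * Gsum p F (χ ^ t) * Gsum p F (χ ^ ((s : ℤ) - (t : ℤ)))
          = (1 + (χ ^ s) (-1)) * Gsum p F (χ ^ s) := by
  haveI : Fact p.Prime := ⟨hp⟩
  letI : DecidableEq F := Classical.decEq F
  set ψ := psiF p F with hψdef
  have hψ : ψ.IsPrimitive := psiF_primitive p F
  have hqC : (Fintype.card F : ℂ) = (m : ℂ) * f + 1 := by rw [hcard]; push_cast; ring
  have hflC : (f : ℂ) - 1 = (l : ℂ) * m := by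
    have h0 : ((f - 1 : ℕ) : ℂ) = ((l * m : ℕ) : ℂ) := by rw [hlf]
    rw [Nat.cast_sub hf] at h0
    push_cast at h0
    linear_combination h0
  have hmC : (m : ℂ) ≠ 0 := Nat.cast_ne_zero.mpr hm.ne'
  have hqne : (Fintype.card F : ℂ) - 1 ≠ 0 := by
    rw [hqC]
    have : ((m : ℂ) * f + 1) - 1 = (m : ℂ) * f := by ring
    rw [this]
    exact mul_ne_zero hmC (Nat.cast_ne_zero.mpr hf.ne')
  have hcardH : (Hset F m).ncard = f := by
    have h0 : Hset F m = ↑(Hf F m) := by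
      ext x
      simp only [Hset, Set.mem_setOf_eq, Finset.mem_coe, mem_Hf]
    rw [h0, Set.ncard_coe_finset, Hf_card hm hχ hcard]
  have hNa : ∀ a : F, {x : F × F | x.1 ∈ Hset F m ∧ x.2 ∈ Hset F m ∧ x.1 - x.2 = a}.ncard
      = Ncnt F m a := by
    intro a
    have h0 : {x : F × F | x.1 ∈ Hset F m ∧ x.2 ∈ Hset F m ∧ x.1 - x.2 = a}
        = ↑((Hf F m ×ˢ Hf F m).filter (fun xy => xy.1 - xy.2 = a)) := by
      ext xy
      simp only [Set.mem_setOf_eq, Finset.coe_filter, Finset.mem_product, mem_Hf, Hset]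
      tauto
    rw [h0, Set.ncard_coe_finset]
    rfl
  have hN0 : Ncnt F m 0 = f := by
    rw [← Hf_card hm hχ hcard]
    unfold Ncnt
    apply Finset.card_nbij' (fun xy => xy.1) (fun x => (x, x))
    · intro xy hxy
      rw [Finset.mem_coe, Finset.mem_filter, Finset.mem_product] at hxy
      exact hxy.1.1
    · intro x hx
      rw [Finset.mem_coe, Finset.mem_filter, Finset.mem_product]
      exact ⟨⟨hx, hx⟩, sub_self x⟩
    · intro xy hxy
      rw [Finset.mem_coe, Finset.mem_filter] at hxy
      have h1 : xy.1 = xy.2 := by linear_combination hxy.2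
      exact Prod.ext rfl h1
    · intro x hx
      rfl
  have hDSiff : IsDiffSet (Hset F m) f l ↔ ∀ a : F, a ≠ 0 → Ncnt F m a = l := by
    constructor
    · rintro ⟨_, h⟩ a ha
      rw [← hNa a]; exact h a ha
    · intro h
      exact ⟨hcardH, fun a ha => by rw [hNa a]; exact h a ha⟩
  rw [hDSiff]
  have hGsum : ∀ ξ : MulChar F ℂ, Gsum p F ξ = gaussSum ξ ψ :=
    fun ξ => Gsum_eq_gaussSum p F ξ
  set E : ℕ → ℂ := fun u =>
    (∑ t ∈ (Icc 1 (m - 1)).erase u,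
        (χ ^ t) (-1) * gaussSum (χ ^ t) ψ * gaussSum (χ ^ ((u : ℤ) - (t : ℤ))) ψ)
      - (1 + (χ ^ u) (-1)) * gaussSum (χ ^ u) ψ with hE
  have hgoal : (∀ s : ℕ, 1 ≤ s → s ≤ m - 1 →
      ∑ t ∈ (Finset.Icc 1 (m - 1)).erase s,
          (χ ^ t) (-1) * Gsum p F (χ ^ t) * Gsum p F (χ ^ ((s : ℤ) - (t : ℤ)))
        = (1 + (χ ^ s) (-1)) * Gsum p F (χ ^ s))
      ↔ (∀ s : ℕ, 1 ≤ s → s ≤ m - 1 → E s = 0) := by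
    simp only [hGsum, hE, sub_eq_zero]
  rw [hgoal]
  have hsum_psi : ∀ b : F, b ≠ 0 → ∑ c ∈ univ.erase (0 : F), ψ (c * b) = -1 := by
    intro b hb
    have h3 : ∑ c : F, ψ (c * b) = 0 := by
      have h4 := AddChar.sum_mulShift b hψ
      rw [if_neg hb] at h4
      push_cast at h4
      exact h4
    have h5 := Finset.sum_erase_add univ (fun c => ψ (c * b)) (Finset.mem_univ (0 : F))
    rw [h3] at h5
    simp only [zero_mul, AddChar.map_zero_eq_one] at h5
    linear_combination h5
  have hsum_chi : ∀ u : ℕ, 1 ≤ u → u ≤ m - 1 →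
      ∑ c ∈ univ.erase (0 : F), (χ ^ u) c = 0 := by
    intro u h1 h2
    rw [Finset.sum_erase _ (chi_pow_zero_eq u)]
    exact MulChar.sum_eq_zero_of_ne_one (chi_pow_ne_one hχ h1 h2)
  have hexpand : ∀ {c : F}, c ≠ 0 →
      ((∑ x ∈ Hf F m, ψ (c * x)) * (∑ y ∈ Hf F m, ψ (-c * y))) * (m : ℂ) ^ 2
        = 1 + ((m : ℂ) - 1) * (Fintype.card F : ℂ)
          + ∑ u ∈ Icc 1 (m - 1), ((χ ^ u) c)⁻¹ * E u := by
    intro c hc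
    simp only [hE]
    rw [← expansion hm hχ ψ hψ hc]
    ring
  constructor
  · -- forward direction
    intro hDS s hs1 hs2
    have hTc : ∀ c : F, c ≠ 0 →
        (∑ x ∈ Hf F m, ψ (c * x)) * (∑ y ∈ Hf F m, ψ (-c * y)) = (f : ℂ) - l := by
      intro c hc
      rw [← fourier_T ψ c, ← Finset.sum_erase_add univ _ (Finset.mem_univ (0 : F))]
      have h1 : ∀ a ∈ univ.erase (0 : F),
          (Ncnt F m a : ℂ) * ψ (c * a) = (l : ℂ) * ψ (c * a) := by
        intro a ha
        rw [hDS a (Finset.mem_erase.mp ha).1]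
      rw [Finset.sum_congr rfl h1, ← Finset.mul_sum]
      have h2 : ∑ a ∈ univ.erase (0 : F), ψ (c * a) = -1 := by
        rw [← hsum_psi c hc]
        apply Finset.sum_nbij' (fun a => a) (fun a => a) (fun a ha => ha) (fun a ha => ha)
          (fun a _ => rfl) (fun a _ => rfl)
        intro a _
        rw [mul_comm]
      rw [h2, hN0, mul_zero, AddChar.map_zero_eq_one, mul_one]
      ring
    have hRc : ∀ c : F, c ≠ 0 →
        1 + ((m : ℂ) - 1) * (Fintype.card F : ℂ)
          + ∑ u ∈ Icc 1 (m - 1), ((χ ^ u) c)⁻¹ * E u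
        = (m : ℂ) ^ 2 * ((f : ℂ) - l) := by
      intro c hc
      rw [← hexpand hc, hTc c hc]
      ring
    have key : ∑ c ∈ univ.erase (0 : F), (χ ^ s) c *
        (1 + ((m : ℂ) - 1) * (Fintype.card F : ℂ)
          + ∑ u ∈ Icc 1 (m - 1), ((χ ^ u) c)⁻¹ * E u)
        = 0 := by
      have h1 : ∀ c ∈ univ.erase (0 : F), (χ ^ s) c *
          (1 + ((m : ℂ) - 1) * (Fintype.card F : ℂ)
            + ∑ u ∈ Icc 1 (m - 1), ((χ ^ u) c)⁻¹ * E u)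
          = ((m : ℂ) ^ 2 * ((f : ℂ) - l)) * (χ ^ s) c := by
        intro c hc
        rw [hRc c (Finset.mem_erase.mp hc).1]
        ring
      rw [Finset.sum_congr rfl h1, ← Finset.mul_sum, hsum_chi s hs1 hs2, mul_zero]
    have key2 : ∑ c ∈ univ.erase (0 : F), (χ ^ s) c *
        (1 + ((m : ℂ) - 1) * (Fintype.card F : ℂ)
          + ∑ u ∈ Icc 1 (m - 1), ((χ ^ u) c)⁻¹ * E u)
        = E s * ((Fintype.card F : ℂ) - 1) := by
      have h1 : ∀ c ∈ univ.erase (0 : F), (χ ^ s) c *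
          (1 + ((m : ℂ) - 1) * (Fintype.card F : ℂ)
            + ∑ u ∈ Icc 1 (m - 1), ((χ ^ u) c)⁻¹ * E u)
          = (1 + ((m : ℂ) - 1) * (Fintype.card F : ℂ)) * (χ ^ s) c
            + ∑ u ∈ Icc 1 (m - 1), ((χ ^ s) c * ((χ ^ u) c)⁻¹) * E u := by
        intro c hc
        rw [mul_add, Finset.mul_sum]
        congr 1
        · ring
        · exact Finset.sum_congr rfl fun u _ => by ring
      rw [Finset.sum_congr rfl h1, Finset.sum_add_distrib, ← Finset.mul_sum,
        hsum_chi s hs1 hs2, mul_zero, zero_add, Finset.sum_comm]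
      have h2 : ∀ u ∈ Icc 1 (m - 1),
          (∑ c ∈ univ.erase (0 : F), ((χ ^ s) c * ((χ ^ u) c)⁻¹) * E u)
            = (if u = s then (Fintype.card F : ℂ) - 1 else 0) * E u := by
        intro u hu
        rw [Finset.mem_Icc] at hu
        rw [← Finset.sum_mul]
        congr 1
        rcases eq_or_ne u s with rfl | hus
        · rw [if_pos rfl]
          have h3 : ∀ c ∈ univ.erase (0 : F), (χ ^ u) c * ((χ ^ u) c)⁻¹ = 1 := by
            intro c hc
            exact mul_inv_cancel₀ (chi_val_ne_zero (χ ^ u) (Finset.mem_erase.mp hc).1)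
          rw [Finset.sum_congr rfl h3, Finset.sum_const, nsmul_eq_mul, mul_one,
            Finset.card_erase_of_mem (Finset.mem_univ _), Finset.card_univ]
          rw [Nat.cast_sub Fintype.card_pos]
          norm_num
        · rw [if_neg hus]
          have hξ : χ ^ s * (χ ^ u)⁻¹ ≠ 1 := by
            intro h
            rw [mul_inv_eq_one] at h
            have h4 := pow_eq_pow_iff_modEq.mp h
            rw [hχ] at h4
            have h5 : s % m = u % m := h4
            rw [Nat.mod_eq_of_lt (by omega), Nat.mod_eq_of_lt (by omega)] at h5
            exact hus h5.symm
          have h6 : ∀ c ∈ univ.erase (0 : F),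
              (χ ^ s) c * ((χ ^ u) c)⁻¹ = (χ ^ s * (χ ^ u)⁻¹) c := by
            intro c hc
            rw [MulChar.coeToFun_mul, Pi.mul_apply, MulChar.inv_apply_eq_inv']
          rw [Finset.sum_congr rfl h6,
            Finset.sum_erase _ (MulChar.map_nonunit _ not_isUnit_zero)]
          exact MulChar.sum_eq_zero_of_ne_one hξ
      rw [Finset.sum_congr rfl h2]
      simp only [ite_mul, zero_mul]
      rw [Finset.sum_ite_eq' (Icc 1 (m - 1)) s,
        if_pos (Finset.mem_Icc.mpr ⟨hs1, hs2⟩)]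
      ring
    have h7 : E s * ((Fintype.card F : ℂ) - 1) = 0 := by rw [← key2, key]
    rcases mul_eq_zero.mp h7 with h8 | h8
    · exact h8
    · exact absurd h8 hqne
  · -- backward direction
    intro hQ a ha
    have hE0 : ∀ u ∈ Icc 1 (m - 1), E u = 0 := by
      intro u hu
      rw [Finset.mem_Icc] at hu
      exact hQ u hu.1 hu.2
    have hTc : ∀ c : F, c ≠ 0 →
        (∑ x ∈ Hf F m, ψ (c * x)) * (∑ y ∈ Hf F m, ψ (-c * y)) = (f : ℂ) - l := by
      intro c hc
      apply mul_left_cancel₀ (pow_ne_zero 2 hmC)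
      have h1 := hexpand hc
      have h2 : ∀ u ∈ Icc 1 (m - 1), ((χ ^ u) c)⁻¹ * E u = 0 := by
        intro u hu
        rw [hE0 u hu, mul_zero]
      rw [Finset.sum_congr rfl h2, Finset.sum_const_zero, add_zero] at h1
      rw [show (m : ℂ) ^ 2 * ((∑ x ∈ Hf F m, ψ (c * x)) * (∑ y ∈ Hf F m, ψ (-c * y)))
          = ((∑ x ∈ Hf F m, ψ (c * x)) * (∑ y ∈ Hf F m, ψ (-c * y))) * (m : ℂ) ^ 2 by ring,
        h1]
      linear_combination ((m : ℂ) - 1) * hqC - (m : ℂ) * hflC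
    have h3 := inversion (m := m) ψ hψ a
    rw [← Finset.sum_erase_add univ _ (Finset.mem_univ (0 : F))] at h3
    have h4 : ∀ c ∈ univ.erase (0 : F),
        (∑ x ∈ Hf F m, ψ (c * x)) * (∑ y ∈ Hf F m, ψ (-c * y)) * ψ (-(c * a))
          = ((f : ℂ) - l) * ψ (c * (-a)) := by
      intro c hc
      rw [hTc c (Finset.mem_erase.mp hc).1]
      have : -(c * a) = c * (-a) := by ring
      rw [this]
    rw [Finset.sum_congr rfl h4, ← Finset.mul_sum, hsum_psi (-a) (neg_ne_zero.mpr ha)] at h3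
    have h5 : (∑ x ∈ Hf F m, ψ ((0 : F) * x)) * (∑ y ∈ Hf F m, ψ (-(0 : F) * y))
        * ψ (-((0 : F) * a)) = (f : ℂ) * f := by
      simp only [zero_mul, neg_zero, AddChar.map_zero_eq_one, mul_one]
      rw [Finset.sum_const, Hf_card hm hχ hcard, nsmul_eq_mul, mul_one]
    rw [h5] at h3
    have h6 : (Fintype.card F : ℂ) * (Ncnt F m a : ℂ)
        = (Fintype.card F : ℂ) * (l : ℂ) := by
      rw [← h3]
      linear_combination (f : ℂ) * hflC - (l : ℂ) * hqC
    have h7 : (Fintype.card F : ℂ) ≠ 0 := Nat.cast_ne_zero.mpr Fintype.card_ne_zero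
    have h8 := mul_left_cancel₀ h7 h6
    exact_mod_cast h8
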